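/- arXiv:1506.03916 — 4 statements merged into one kernel-verified Lean document; each statement's English description precedes it below -/
import Mathlib

section
/- Let f : ℕ → ℕ satisfy f(0) = 0 and f(c+1) ≤ f(c) + 1 for all c. Let n ≥ 1 and r be integers with 0 ≤ r ≤ n − 1, and set n' = n − r. For any nonnegative integers c₁, …, c_n with ∑ⱼ cⱼ = n − 1, there exist nonnegative integers c₁', …, c_{n'}' with ∑ⱼ cⱼ' = n' − 1 such that ∑_{j=1}^{n} f(cⱼ) ≤ ∑_{j=1}^{n'} f(cⱼ') + r. -/
private lemma step_ms (f : ℕ → ℕ) (h0 : f 0 = 0)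
    (hstep : ∀ c : ℕ, f (c + 1) ≤ f c + 1)
    (m : ℕ) (hm : 2 ≤ m) (s : Multiset ℕ)
    (hcard : Multiset.card s = m) (hsum : s.sum = m - 1) :
    ∃ t : Multiset ℕ, Multiset.card t = m - 1 ∧ t.sum = m - 2 ∧
      (s.map f).sum ≤ (t.map f).sum + 1 := by
  have hz : (0 : ℕ) ∈ s := by
    by_contra hz
    have h1 : ∀ x ∈ s, 1 ≤ x := by
      intro x hx
      rcases Nat.eq_zero_or_pos x with h | h
      · exact absurd (h ▸ hx) hz
      · exact h
    have := Multiset.card_nsmul_le_sum h1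
    simp only [smul_eq_mul, mul_one] at this
    omega
  obtain ⟨u, rfl⟩ := Multiset.exists_cons_of_mem hz
  have hucard : Multiset.card u = m - 1 := by
    simp at hcard; omega
  have husum : u.sum = m - 1 := by simp at hsum ⊢; omega
  have hpos : ∃ a ∈ u, a ≠ 0 := by
    by_contra h
    push_neg at h
    have : u.sum = 0 := Multiset.sum_eq_zero h
    omega
  obtain ⟨a, ha, hane⟩ := hpos
  obtain ⟨b, rfl⟩ := Nat.exists_eq_succ_of_ne_zero hane
  obtain ⟨v, rfl⟩ := Multiset.exists_cons_of_mem ha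
  refine ⟨b ::ₘ v, ?_, ?_, ?_⟩
  · simp at hucard ⊢; omega
  · simp at husum ⊢; omega
  · simp only [Multiset.map_cons, Multiset.sum_cons, h0, Nat.succ_eq_add_one]
    have := hstep b
    omega

private lemma main_ms (f : ℕ → ℕ) (h0 : f 0 = 0)
    (hstep : ∀ c : ℕ, f (c + 1) ≤ f c + 1) :
    ∀ r m : ℕ, r + 1 ≤ m → ∀ s : Multiset ℕ,
      Multiset.card s = m → s.sum = m - 1 →
      ∃ t : Multiset ℕ, Multiset.card t = m - r ∧ t.sum = m - r - 1 ∧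
        (s.map f).sum ≤ (t.map f).sum + r := by
  intro r
  induction r with
  | zero => intro m hm s hc hs; exact ⟨s, by simpa using hc, by simpa using hs, by simp⟩
  | succ r ih =>
    intro m hm s hc hs
    obtain ⟨t, htc, hts, htle⟩ := ih m (by omega) s hc hs
    obtain ⟨t', htc', hts', htle'⟩ := step_ms f h0 hstep (m - r) (by omega) t htc hts
    refine ⟨t', by omega, by omega, by omega⟩

private lemma sum_get (g : ℕ → ℕ) (t : Multiset ℕ) :
    ∑ i : Fin t.toList.length, g (t.toList.get i) = (t.map g).sum := by
  conv_rhs => rw [← Multiset.coe_toList t]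
  rw [Multiset.map_coe, Multiset.sum_coe, ← List.sum_ofFn]
  congr 1
  show List.ofFn (g ∘ t.toList.get) = _
  rw [← List.map_ofFn, List.ofFn_get]

private lemma toFun (t : Multiset ℕ) (f : ℕ → ℕ) (k : ℕ) (h : Multiset.card t = k) :
    ∃ c : Fin k → ℕ, (∑ j, c j) = t.sum ∧ (∑ j, f (c j)) = (t.map f).sum := by
  subst h
  have hl : t.toList.length = Multiset.card t := Multiset.length_toList t
  have key : ∀ g : ℕ → ℕ,
      ∑ j : Fin (Multiset.card t), g (t.toList.get (Fin.cast hl.symm j)) = (t.map g).sum := by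
    intro g
    exact (Fin.sum_congr' (fun i : Fin t.toList.length => g (t.toList.get i)) hl.symm).trans
      (sum_get g t)
  refine ⟨fun j => t.toList.get (Fin.cast hl.symm j), ?_, key f⟩
  have := key id
  simpa using this

theorem stmt5 (f : ℕ → ℕ) (h0 : f 0 = 0)
    (hstep : ∀ c : ℕ, f (c + 1) ≤ f c + 1)
    (n r : ℕ) (hn : 1 ≤ n) (hr : r ≤ n - 1)
    (cs : Fin n → ℕ) (hsum : (∑ j, cs j) = n - 1) :
    ∃ cs' : Fin (n - r) → ℕ,
      (∑ j, cs' j) = (n - r) - 1 ∧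
      (∑ j, f (cs j)) ≤ (∑ j, f (cs' j)) + r := by
  have hsc : Multiset.card (Finset.univ.val.map cs) = n := by simp
  have hss : (Finset.univ.val.map cs).sum = n - 1 := by
    rw [← Finset.sum_eq_multiset_sum]; exact hsum
  obtain ⟨t, htc, hts, htle⟩ := main_ms f h0 hstep r n (by omega) _ hsc hss
  obtain ⟨c, hc1, hc2⟩ := toFun t f (n - r) htc
  refine ⟨c, by omega, ?_⟩
  have hmap : ((Finset.univ.val.map cs).map f).sum = ∑ j, f (cs j) := by
    rw [Multiset.map_map, ← Finset.sum_eq_multiset_sum]; rfl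
  omega
end

section
/- Let g ≥ 1 and b₁ < ⋯ < b_g be strictly increasing positive integers, and define f(c) = #{i : bᵢ ≤ c} for c ∈ ℕ. Let i₀ maximize i/bᵢ over i ∈ {1,…,g}. Then for every N ≥ 0 divisible by b_{i₀}, the maximum of ∑_{j=1}^{m} f(cⱼ) over all m ≥ 1 and nonnegative integers c₁, …, c_m with ∑ cⱼ ≤ N equals N·i₀/b_{i₀}. -/
theorem stmt7 (g : ℕ) (hg : 1 ≤ g) (b : ℕ → ℕ)
    (hpos : ∀ i, 1 ≤ i → i ≤ g → 0 < b i)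
    (hmono : ∀ i j, 1 ≤ i → i < j → j ≤ g → b i < b j)
    (f : ℕ → ℕ)
    (hf : ∀ c : ℕ, f c = ((Finset.Icc 1 g).filter (fun i => b i ≤ c)).card)
    (i₀ : ℕ) (hi₀1 : 1 ≤ i₀) (hi₀g : i₀ ≤ g)
    (hmax : ∀ i, 1 ≤ i → i ≤ g → (i : ℚ) / (b i : ℚ) ≤ (i₀ : ℚ) / (b i₀ : ℚ))
    (N : ℕ) (hdvd : b i₀ ∣ N) :
    IsGreatest {S : ℕ | ∃ m : ℕ, ∃ cs : Fin m → ℕ, 1 ≤ m ∧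
        (∑ j, cs j) ≤ N ∧ S = ∑ j, f (cs j)} (N / b i₀ * i₀) := by
  have hb0 : 0 < b i₀ := hpos i₀ hi₀1 hi₀g
  set q := N / b i₀ with hq
  have hqN : q * b i₀ = N := Nat.div_mul_cancel hdvd
  -- f 0 = 0
  have hf0 : f 0 = 0 := by
    rw [hf]
    simp only [Finset.card_eq_zero]
    rw [Finset.filter_eq_empty_iff]
    intro i hi
    simp only [Finset.mem_Icc] at hi
    exact Nat.not_le.mpr (hpos i hi.1 hi.2)
  -- f (b i₀) = i₀
  have hfb : f (b i₀) = i₀ := by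
    rw [hf]
    have : (Finset.Icc 1 g).filter (fun i => b i ≤ b i₀) = Finset.Icc 1 i₀ := by
      ext i
      simp only [Finset.mem_filter, Finset.mem_Icc]
      constructor
      · rintro ⟨⟨h1, h2⟩, h3⟩
        refine ⟨h1, ?_⟩
        by_contra h
        push_neg at h
        exact absurd h3 (Nat.not_le.mpr (hmono i₀ i hi₀1 h h2))
      · rintro ⟨h1, h2⟩
        refine ⟨⟨h1, le_trans h2 hi₀g⟩, ?_⟩
        rcases lt_or_eq_of_le h2 with h | h
        · exact le_of_lt (hmono i i₀ h1 h hi₀g)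
        · rw [h]
    rw [this, Nat.card_Icc]; omega
  -- key: f c * b i₀ ≤ c * i₀
  have key : ∀ c : ℕ, f c * b i₀ ≤ c * i₀ := by
    intro c
    rcases Nat.eq_zero_or_pos (f c) with h | h
    · simp [h]
    · set S := (Finset.Icc 1 g).filter (fun i => b i ≤ c) with hS
      have hSne : S.Nonempty := by
        rw [← Finset.card_pos]
        rw [hf] at h; exact h
      obtain ⟨k, hkS, hkmax⟩ := Finset.exists_max_image S id hSne
      rw [hS, Finset.mem_filter, Finset.mem_Icc] at hkS
      obtain ⟨⟨hk1, hkg⟩, hkc⟩ := hkS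
      have hcard : f c ≤ k := by
        rw [hf]
        have : (Finset.Icc 1 g).filter (fun i => b i ≤ c) ⊆ Finset.Icc 1 k := by
          intro i hi
          have hik := hkmax i hi
          simp only [Finset.mem_filter, Finset.mem_Icc] at hi ⊢
          exact ⟨hi.1.1, hik⟩
        calc ((Finset.Icc 1 g).filter (fun i => b i ≤ c)).card
            ≤ (Finset.Icc 1 k).card := Finset.card_le_card this
          _ = k := by rw [Nat.card_Icc]; omega
      have hbk : 0 < b k := hpos k hk1 hkg
      have hrat := hmax k hk1 hkg
      have hkb : k * b i₀ ≤ i₀ * b k := by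
        have := (div_le_div_iff₀ (by exact_mod_cast hbk) (by exact_mod_cast hb0)).mp hrat
        exact_mod_cast this
      calc f c * b i₀ ≤ k * b i₀ := Nat.mul_le_mul_right _ hcard
        _ ≤ i₀ * b k := hkb
        _ ≤ i₀ * c := Nat.mul_le_mul_left _ hkc
        _ = c * i₀ := Nat.mul_comm _ _
  constructor
  · -- membership
    refine ⟨q + 1, fun j => if (j : ℕ) < q then b i₀ else 0, Nat.le_add_left 1 q, ?_, ?_⟩
    · have : (∑ j : Fin (q + 1), if (j : ℕ) < q then b i₀ else 0) = q * b i₀ := by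
        rw [Fin.sum_univ_castSucc]
        simp [Fin.is_lt]
      rw [this, hqN]
    · have : (∑ j : Fin (q + 1), f (if (j : ℕ) < q then b i₀ else 0)) = q * i₀ := by
        rw [Fin.sum_univ_castSucc]
        simp [Fin.is_lt, hf0, hfb]
      rw [this]
  · -- upper bound
    rintro S ⟨m, cs, hm, hsum, rfl⟩
    have h1 : (∑ j, f (cs j)) * b i₀ ≤ (q * i₀) * b i₀ := by
      calc (∑ j, f (cs j)) * b i₀ = ∑ j, f (cs j) * b i₀ := by rw [Finset.sum_mul]
        _ ≤ ∑ j, cs j * i₀ := Finset.sum_le_sum fun j _ => key (cs j)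
        _ = (∑ j, cs j) * i₀ := by rw [Finset.sum_mul]
        _ ≤ N * i₀ := Nat.mul_le_mul_right _ hsum
        _ = (q * i₀) * b i₀ := by rw [← hqN]; ring
    exact Nat.le_of_mul_le_mul_right h1 hb0
end

section
/- Let g ≥ 1, b₁ < ⋯ < b_g strictly increasing positive integers, f(c) = #{i : bᵢ ≤ c}, and define M(N) = max{∑_{j=1}^{n} f(cⱼ) : n ≥ 1, cⱼ ≥ 0 integers, ∑ cⱼ = N} for N ≥ 1. Then the sequence M(N)/N converges as N → ∞ to max_{1≤i≤g} i/bᵢ. -/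
theorem stmt8 (g : ℕ) (hg : 1 ≤ g) (b : ℕ → ℕ)
    (hpos : ∀ i, 1 ≤ i → i ≤ g → 0 < b i)
    (hmono : ∀ i j, 1 ≤ i → i < j → j ≤ g → b i < b j)
    (f : ℕ → ℕ)
    (hf : ∀ c : ℕ, f c = ((Finset.Icc 1 g).filter (fun i => b i ≤ c)).card)
    (M : ℕ → ℕ)
    (hM : ∀ N : ℕ, 1 ≤ N →
      IsGreatest {S : ℕ | ∃ m : ℕ, ∃ cs : Fin m → ℕ, 1 ≤ m ∧
        (∑ j, cs j) = N ∧ S = ∑ j, f (cs j)} (M N))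
    (L : ℝ)
    (hL : IsGreatest {q : ℝ | ∃ i : ℕ, 1 ≤ i ∧ i ≤ g ∧ q = (i : ℝ) / (b i : ℝ)} L) :
    Filter.Tendsto (fun N : ℕ => (M N : ℝ) / (N : ℝ)) Filter.atTop (nhds L) := by
  obtain ⟨⟨i, hi1, hig, hLi⟩, hLub⟩ := hL
  have hbi : 0 < b i := hpos i hi1 hig
  have hL0 : 0 ≤ L := by rw [hLi]; positivity
  have hmono' : ∀ p q, 1 ≤ p → p ≤ q → q ≤ g → b p ≤ b q := by
    intro p q hp hpq hq
    rcases eq_or_lt_of_le hpq with h | h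
    · rw [h]
    · exact (hmono p q hp h hq).le
  have hfg : ∀ c, f c ≤ g := by
    intro c
    rw [hf]
    calc _ ≤ (Finset.Icc 1 g).card := Finset.card_filter_le _ _
    _ = g := by simp
  have hkey : ∀ c : ℕ, (f c : ℝ) ≤ L * c := by
    intro c
    rcases Nat.eq_zero_or_pos (f c) with h0 | hpos'
    · rw [h0]; push_cast; positivity
    · have hfcg := hfg c
      have hbfc : b (f c) ≤ c := by
        by_contra hb
        push_neg at hb
        have hsub : (Finset.Icc 1 g).filter (fun j => b j ≤ c) ⊆ Finset.Icc 1 (f c - 1) := by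
          intro j hj
          simp only [Finset.mem_filter, Finset.mem_Icc] at hj ⊢
          refine ⟨hj.1.1, ?_⟩
          by_contra hjk
          push_neg at hjk
          have hfj : f c ≤ j := by omega
          exact absurd (le_trans (hmono' (f c) j hpos' hfj hj.1.2) hj.2) (not_le.mpr hb)
        have hcard := Finset.card_le_card hsub
        rw [← hf] at hcard
        simp [Nat.card_Icc] at hcard
        omega
      have h1 : ((f c : ℝ)) / (b (f c)) ≤ L := hLub ⟨f c, hpos', hfcg, rfl⟩
      have hbpos : (0:ℝ) < b (f c) := by exact_mod_cast hpos (f c) hpos' hfcg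
      calc (f c : ℝ) = (f c : ℝ) / b (f c) * b (f c) := by field_simp
      _ ≤ L * b (f c) := mul_le_mul_of_nonneg_right h1 hbpos.le
      _ ≤ L * c := by
          apply mul_le_mul_of_nonneg_left _ hL0
          exact_mod_cast hbfc
  have hub : ∀ N, 1 ≤ N → (M N : ℝ) ≤ L * N := by
    intro N hN
    obtain ⟨m, cs, hm, hsum, hS⟩ := (hM N hN).1
    rw [hS]
    push_cast
    calc (∑ j, (f (cs j) : ℝ)) ≤ ∑ j, L * (cs j) := Finset.sum_le_sum (fun j _ => hkey (cs j))
    _ = L * N := by rw [← Finset.mul_sum, ← hsum]; push_cast; ring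
  have hfb : i ≤ f (b i) := by
    rw [hf]
    have hsub : Finset.Icc 1 i ⊆ (Finset.Icc 1 g).filter (fun j => b j ≤ b i) := by
      intro j hj
      simp only [Finset.mem_Icc, Finset.mem_filter] at hj ⊢
      exact ⟨⟨hj.1, hj.2.trans hig⟩, hmono' j i hj.1 hj.2 hig⟩
    have := Finset.card_le_card hsub
    simpa using this
  have hlb : ∀ N, 1 ≤ N → L * N - g ≤ (M N : ℝ) := by
    intro N hN
    set m := N / b i with hm
    set r := N % b i with hr
    have hdm : m * b i + r = N := by rw [mul_comm]; exact Nat.div_add_mod N (b i)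
    have hMge : m * i ≤ M N := by
      have hmem : (m * f (b i) + f r : ℕ) ∈ {S : ℕ | ∃ m' : ℕ, ∃ cs : Fin m' → ℕ, 1 ≤ m' ∧
          (∑ j, cs j) = N ∧ S = ∑ j, f (cs j)} := by
        refine ⟨m + 1, Fin.snoc (fun _ => b i) r, Nat.le_add_left 1 m, ?_, ?_⟩
        · rw [Fin.sum_univ_castSucc]
          simp only [Fin.snoc_castSucc, Fin.snoc_last, Finset.sum_const, smul_eq_mul, Finset.card_univ, Fintype.card_fin]
          exact hdm
        · rw [Fin.sum_univ_castSucc]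
          simp only [Fin.snoc_castSucc, Fin.snoc_last, Finset.sum_const, smul_eq_mul, Finset.card_univ, Fintype.card_fin]
      have h2 := (hM N hN).2 hmem
      calc m * i ≤ m * f (b i) := Nat.mul_le_mul_left m hfb
      _ ≤ m * f (b i) + f r := Nat.le_add_right _ _
      _ ≤ M N := h2
    have hbpos : (0:ℝ) < b i := by exact_mod_cast hbi
    have hmR : (N : ℝ) / b i - 1 ≤ (m : ℝ) := by
      have h1 : N < m * b i + b i := by
        have := Nat.mod_lt N hbi
        omega
      rw [sub_le_iff_le_add, div_le_iff₀ hbpos]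
      have h1' : (N : ℝ) < m * b i + b i := by exact_mod_cast h1
      nlinarith
    calc L * N - g ≤ L * N - i := by
          have hig' : (i:ℝ) ≤ g := by exact_mod_cast hig
          linarith
    _ = ((N:ℝ)/b i - 1) * i := by rw [hLi]; field_simp
    _ ≤ (m : ℝ) * i := by
          apply mul_le_mul_of_nonneg_right hmR
          positivity
    _ ≤ M N := by exact_mod_cast hMge
  have hlow : Filter.Tendsto (fun N : ℕ => L - (g:ℝ)/N) Filter.atTop (nhds L) := by
    have := (tendsto_const_nhds (x := L) (f := Filter.atTop (α := ℕ))).sub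
      (tendsto_const_div_atTop_nhds_zero_nat (g:ℝ))
    simpa using this
  refine tendsto_of_tendsto_of_tendsto_of_le_of_le' hlow tendsto_const_nhds ?_ ?_
  · filter_upwards [Filter.eventually_ge_atTop 1] with N hN
    have hNpos : (0:ℝ) < N := by exact_mod_cast hN
    rw [le_div_iff₀ hNpos]
    have := hlb N hN
    have hexp : (L - (g:ℝ)/N) * N = L * N - g := by field_simp
    linarith [hexp ▸ this]
  · filter_upwards [Filter.eventually_ge_atTop 1] with N hN
    have hNpos : (0:ℝ) < N := by exact_mod_cast hN
    rw [div_le_iff₀ hNpos]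
    exact hub N hN
end

section
/- Let f : ℕ → ℕ be the step function f(c) = #{i ∈ {1,…,g} : bᵢ ≤ c} for strictly increasing positive integers b₁ < ⋯ < b_g, and let i₀ ∈ {1,…,g} maximize i/bᵢ. Then for every n ≥ 1 and every choice of nonnegative integers c₁, …, c_n with ∑ cⱼ = n − 1, one has ∑_{j=1}^n f(cⱼ) ≤ (n − 1)·i₀/b_{i₀} (as an inequality of rationals). -/
theorem stmt16 (g : ℕ) (hg : 1 ≤ g) (b : ℕ → ℕ)
    (hpos : ∀ i, 1 ≤ i → i ≤ g → 0 < b i)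
    (hmono : ∀ i j, 1 ≤ i → i < j → j ≤ g → b i < b j)
    (f : ℕ → ℕ)
    (hf : ∀ c : ℕ, f c = ((Finset.Icc 1 g).filter (fun i => b i ≤ c)).card)
    (i₀ : ℕ) (hi₀1 : 1 ≤ i₀) (hi₀g : i₀ ≤ g)
    (hmax : ∀ i, 1 ≤ i → i ≤ g → (i : ℚ) / (b i : ℚ) ≤ (i₀ : ℚ) / (b i₀ : ℚ)) :
    ∀ n : ℕ, 1 ≤ n → ∀ cs : Fin n → ℕ, (∑ j, cs j) = n - 1 →
      ((∑ j, f (cs j) : ℕ) : ℚ) ≤ ((n : ℚ) - 1) * (i₀ : ℚ) / (b i₀ : ℚ) := by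
  have hb₀ : (0 : ℚ) < (b i₀ : ℚ) := by exact_mod_cast hpos i₀ hi₀1 hi₀g
  have hr : (0 : ℚ) ≤ (i₀ : ℚ) / (b i₀ : ℚ) := by positivity
  -- key pointwise bound
  have key : ∀ c : ℕ, (f c : ℚ) ≤ (c : ℚ) * ((i₀ : ℚ) / (b i₀ : ℚ)) := by
    intro c
    set S := (Finset.Icc 1 g).filter (fun i => b i ≤ c) with hS
    rcases eq_or_ne S ∅ with h0 | hne
    · rw [hf c, ← hS, h0]
      simp
      positivity
    · -- S nonempty, take max m
      have hne' : S.Nonempty := Finset.nonempty_iff_ne_empty.mpr hne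
      obtain ⟨m, hmS, hmax'⟩ := S.exists_max_image id hne'
      have hmmem := Finset.mem_filter.mp hmS
      have hm1 : 1 ≤ m := (Finset.mem_Icc.mp hmmem.1).1
      have hmg : m ≤ g := (Finset.mem_Icc.mp hmmem.1).2
      have hmc : b m ≤ c := hmmem.2
      -- S = Icc 1 m
      have hSeq : S = Finset.Icc 1 m := by
        apply Finset.ext
        intro i
        simp only [hS, Finset.mem_filter, Finset.mem_Icc]
        constructor
        · rintro ⟨⟨h1, _⟩, h2⟩
          exact ⟨h1, hmax' i (Finset.mem_filter.mpr ⟨Finset.mem_Icc.mpr ⟨h1, ‹_›⟩, h2⟩)⟩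
        · rintro ⟨h1, h2⟩
          refine ⟨⟨h1, le_trans h2 hmg⟩, ?_⟩
          rcases eq_or_lt_of_le h2 with rfl | hlt
          · exact hmc
          · exact le_trans (hmono i m h1 hlt hmg).le hmc
      have hfc : f c = m := by rw [hf c, ← hS, hSeq, Nat.card_Icc]; omega
      have hbm : (0 : ℚ) < (b m : ℚ) := by exact_mod_cast hpos m hm1 hmg
      have h1 : (f c : ℚ) = (b m : ℚ) * ((m : ℚ) / (b m : ℚ)) := by
        rw [hfc]; field_simp
      rw [h1]
      have hbc : (b m : ℚ) ≤ (c : ℚ) := by exact_mod_cast hmc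
      exact mul_le_mul hbc (hmax m hm1 hmg) (by positivity) (by positivity)
  intro n hn cs hsum
  rw [div_eq_mul_inv, mul_assoc, ← div_eq_mul_inv]
  push_cast
  calc (∑ j, (f (cs j) : ℚ)) ≤ ∑ j, (cs j : ℚ) * ((i₀ : ℚ) / (b i₀ : ℚ)) := by
        exact Finset.sum_le_sum fun j _ => key (cs j)
    _ = (∑ j, (cs j : ℚ)) * ((i₀ : ℚ) / (b i₀ : ℚ)) := by rw [← Finset.sum_mul]
    _ ≤ ((n : ℚ) - 1) * ((i₀ : ℚ) / (b i₀ : ℚ)) := by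
        apply mul_le_mul_of_nonneg_right _ hr
        have h1 : (∑ j, (cs j : ℚ)) = ((n - 1 : ℕ) : ℚ) := by
          rw [← Nat.cast_sum]; exact_mod_cast congrArg (Nat.cast : ℕ → ℚ) hsum
        rw [h1, Nat.cast_sub hn, Nat.cast_one]
end
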